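/- (Local-global formula for heights) Let Φ be an irreducible crystallographic root system and α ∈ Φ⁺. Then ht_Φ(α) − 1 = Σ_{X} (ht_X(α) − 1), where X ranges over all codimension-2 intersection subspaces contained in H_α of the Weyl arrangement (equivalently, over all rank-2 root subsystems Φ_X = Φ ∩ X^⊥ containing α arising as such localizations), and ht_X(α) is the height of α in the irreducible component of Φ_X containing α, with respect to the positive system Φ⁺ ∩ Φ_X. -/

import Mathlib

open Finset Submodule
open scoped Classical

/-- A (reduced) crystallographic root system in the Euclidean space `ℝⁿ`,
together with a chosen simple system `Δ` and the corresponding positive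
roots `Pos`, and the (nonnegative integer) coordinates `coeff β a` of a
positive root `β` with respect to the simple roots. -/
structure CRS (n : ℕ) where
  Φ : Finset (EuclideanSpace ℝ (Fin n))
  Δ : Finset (EuclideanSpace ℝ (Fin n))
  Pos : Finset (EuclideanSpace ℝ (Fin n))
  coeff : EuclideanSpace ℝ (Fin n) → EuclideanSpace ℝ (Fin n) → ℕ
  zero_notmem : (0 : EuclideanSpace ℝ (Fin n)) ∉ Φ
  span_top : Submodule.span ℝ (Φ : Set (EuclideanSpace ℝ (Fin n))) = ⊤
  Δ_sub : Δ ⊆ Pos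
  Pos_sub : Pos ⊆ Φ
  neg_mem : ∀ α ∈ Φ, -α ∈ Φ
  pos_or_neg : ∀ α ∈ Φ, α ∈ Pos ∨ -α ∈ Pos
  not_pos_and_neg : ∀ α ∈ Pos, -α ∉ Pos
  reduced : ∀ α ∈ Φ, ∀ c : ℝ, c • α ∈ Φ → c = 1 ∨ c = -1
  reflect_mem : ∀ α ∈ Φ, ∀ β ∈ Φ,
    β - ((2 * inner ℝ α β / inner ℝ α α : ℝ)) • α ∈ Φ
  cartan_int : ∀ α ∈ Φ, ∀ β ∈ Φ, ∃ z : ℤ, (2 * inner ℝ α β / inner ℝ α α : ℝ) = z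
  Δ_indep : LinearIndependent ℝ (fun a : Δ => (a : EuclideanSpace ℝ (Fin n)))
  pos_eq_sum : ∀ β ∈ Pos, β = ∑ a ∈ Δ, (coeff β a : ℝ) • a

namespace CRS

variable {n : ℕ}

/-- The height of a positive root: the sum of its coordinates over `Δ`. -/
def ht (R : CRS n) (β : EuclideanSpace ℝ (Fin n)) : ℕ := ∑ a ∈ R.Δ, R.coeff β a

/-- The root order: `rle β α` means `β ≤ α`, i.e. `α - β` is a nonnegative
integer combination of the simple roots. -/
def rle (R : CRS n) (β α : EuclideanSpace ℝ (Fin n)) : Prop :=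
  ∃ c : EuclideanSpace ℝ (Fin n) → ℕ, α - β = ∑ a ∈ R.Δ, (c a : ℝ) • a

/-- An ideal of the positive root poset: a downward closed set of positive roots. -/
def IsIdeal (R : CRS n) (I : Finset (EuclideanSpace ℝ (Fin n))) : Prop :=
  I ⊆ R.Pos ∧ ∀ α ∈ I, ∀ β ∈ R.Pos, R.rle β α → β ∈ I

/-- Irreducibility: the simple system cannot be split into two nonempty
mutually orthogonal parts. -/
def Irred (R : CRS n) : Prop :=
  ∀ s t : Finset (EuclideanSpace ℝ (Fin n)), s ∪ t = R.Δ → Disjoint s t →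
    (∀ a ∈ s, ∀ b ∈ t, (inner ℝ a b : ℝ) = 0) → s = ∅ ∨ t = ∅

/-- The positive roots of the localized root system `Φ_X = Φ ∩ X^⊥`. -/
noncomputable def PosIn (R : CRS n) (X : Submodule ℝ (EuclideanSpace ℝ (Fin n))) :
    Finset (EuclideanSpace ℝ (Fin n)) :=
  R.Pos.filter (fun β => β ∈ Xᗮ)

end CRS

/-- The hyperplane orthogonal to a root `β`. -/
noncomputable def H {n : ℕ} (β : EuclideanSpace ℝ (Fin n)) : Submodule ℝ (EuclideanSpace ℝ (Fin n)) :=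
  (ℝ ∙ β)ᗮ

/-- The simple system (the indecomposable elements) of a positive system `P`. -/
noncomputable def simpleOf {n : ℕ} (P : Finset (EuclideanSpace ℝ (Fin n))) :
    Finset (EuclideanSpace ℝ (Fin n)) :=
  P.filter (fun γ => ¬ ∃ β₁ ∈ P, ∃ β₂ ∈ P, γ = β₁ + β₂)

/-- `HtIn P α m` : `α` has height `m` with respect to the positive system `P`,
i.e. `α` is a nonnegative integer combination of the simple system of `P` whose
coefficients sum to `m`.  (For `α` in an irreducible component of the root
system of `P`, this is the height of `α` in that component.) -/
def HtIn {n : ℕ} (P : Finset (EuclideanSpace ℝ (Fin n)))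
    (α : EuclideanSpace ℝ (Fin n)) (m : ℕ) : Prop :=
  ∃ c : EuclideanSpace ℝ (Fin n) → ℕ,
    α = ∑ s ∈ simpleOf P, (c s : ℝ) • s ∧ m = ∑ s ∈ simpleOf P, c s

section Aux

variable {n : ℕ}

lemma CRS.root_ne_zero (R : CRS n) {β : EuclideanSpace ℝ (Fin n)} (hβ : β ∈ R.Φ) : β ≠ 0 :=
  fun h => R.zero_notmem (h ▸ hβ)

lemma CRS.inner_self_ne (R : CRS n) {β : EuclideanSpace ℝ (Fin n)} (hβ : β ∈ R.Φ) :
    (inner ℝ β β : ℝ) ≠ 0 :=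
  fun h => R.root_ne_zero hβ (inner_self_eq_zero.mp h)

lemma CRS.coeff_eq (R : CRS n) {x y : EuclideanSpace ℝ (Fin n) → ℝ}
    (h : ∑ a ∈ R.Δ, x a • a = ∑ a ∈ R.Δ, y a • a) : ∀ a ∈ R.Δ, x a = y a := by
  intro a ha
  have h0 : ∑ a ∈ R.Δ.attach, (x ↑a - y ↑a) • (a : EuclideanSpace ℝ (Fin n)) = 0 := by
    have hx := Finset.sum_attach R.Δ (fun a => x a • a)
    have hy := Finset.sum_attach R.Δ (fun a => y a • a)
    simp only [sub_smul, Finset.sum_sub_distrib, hx, hy, h, sub_self]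
  have h1 := linearIndependent_iff'.mp R.Δ_indep R.Δ.attach
    (fun a => x ↑a - y ↑a) h0 ⟨a, ha⟩ (Finset.mem_attach _ _)
  have h2 : x a - y a = 0 := by simpa using h1
  linarith

lemma CRS.ht_pos (R : CRS n) {β : EuclideanSpace ℝ (Fin n)} (hβ : β ∈ R.Pos) : 1 ≤ R.ht β := by
  rcases Nat.eq_zero_or_pos (R.ht β) with h | h
  · exfalso
    have hc : ∀ a ∈ R.Δ, R.coeff β a = 0 := fun a ha => (Finset.sum_eq_zero_iff.mp h) a ha
    have hz : β = 0 := by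
      rw [R.pos_eq_sum β hβ]
      refine Finset.sum_eq_zero fun a ha => ?_
      simp [hc a ha]
    exact R.zero_notmem (hz ▸ R.Pos_sub hβ)
  · exact h

/-- If `β + γ = k • s` with all three positive, then `ht β + ht γ = k * ht s`. -/
lemma CRS.ht_comb (R : CRS n) {β γ s : EuclideanSpace ℝ (Fin n)}
    (hβ : β ∈ R.Pos) (hγ : γ ∈ R.Pos) (hs : s ∈ R.Pos) {k : ℝ} (h : β + γ = k • s) :
    (R.ht β : ℝ) + R.ht γ = k * R.ht s := by
  have hL : ∑ a ∈ R.Δ, ((R.coeff β a : ℝ) + R.coeff γ a) • a = β + γ := by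
    conv_rhs => rw [R.pos_eq_sum β hβ, R.pos_eq_sum γ hγ]
    rw [← Finset.sum_add_distrib]
    exact Finset.sum_congr rfl fun a _ => add_smul _ _ _
  have hR : ∑ a ∈ R.Δ, (k * (R.coeff s a : ℝ)) • a = k • s := by
    conv_rhs => rw [R.pos_eq_sum s hs]
    rw [Finset.smul_sum]
    exact Finset.sum_congr rfl fun a _ => (smul_smul _ _ _).symm
  have hco := R.coeff_eq (hL.trans (h.trans hR.symm))
  have hsum : ∑ a ∈ R.Δ, ((R.coeff β a : ℝ) + R.coeff γ a) = ∑ a ∈ R.Δ, k * (R.coeff s a : ℝ) :=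
    Finset.sum_congr rfl hco
  rw [Finset.sum_add_distrib, ← Finset.mul_sum] at hsum
  simpa [CRS.ht] using hsum

/-- Natural-number version with `k = 1`. -/
lemma CRS.ht_add (R : CRS n) {β γ s : EuclideanSpace ℝ (Fin n)}
    (hβ : β ∈ R.Pos) (hγ : γ ∈ R.Pos) (hs : s ∈ R.Pos) (h : s = β + γ) :
    R.ht β + R.ht γ = R.ht s := by
  have h1 := R.ht_comb hβ hγ hs (k := 1) (by rw [one_smul, h])
  have h2 : ((R.ht β + R.ht γ : ℕ) : ℝ) = ((R.ht s : ℕ) : ℝ) := by push_cast; linarith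
  exact_mod_cast h2

end Aux
section Aux2

variable {n : ℕ}

/-- The positive roots lying in a submodule `W`. -/
noncomputable def CRS.PW (R : CRS n) (W : Submodule ℝ (EuclideanSpace ℝ (Fin n))) :
    Finset (EuclideanSpace ℝ (Fin n)) :=
  R.Pos.filter (fun v => v ∈ W)

/-- Key lemma: reflection in an indecomposable element `s` of `P = Pos ∩ W`
maps `P \ {s}` into `P`. -/
lemma CRS.reflect_mem_PW (R : CRS n) (W : Submodule ℝ (EuclideanSpace ℝ (Fin n)))
    {s β : EuclideanSpace ℝ (Fin n)}
    (hs : s ∈ simpleOf (R.PW W)) (hβ : β ∈ R.PW W) (hne : β ≠ s) :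
    β - (2 * inner ℝ s β / inner ℝ s s : ℝ) • s ∈ R.PW W := by
  obtain ⟨hsP, hind⟩ := Finset.mem_filter.mp hs
  obtain ⟨hsPos, hsW⟩ := Finset.mem_filter.mp hsP
  obtain ⟨hβPos, hβW⟩ := Finset.mem_filter.mp hβ
  have hdecomp : ∀ b1 ∈ R.PW W, ∀ b2 ∈ R.PW W, s ≠ b1 + b2 := by
    intro b1 h1 b2 h2 he
    exact hind ⟨b1, h1, b2, h2, he⟩
  have hsΦ := R.Pos_sub hsPos
  have hβΦ := R.Pos_sub hβPos
  have hss := R.inner_self_ne hsΦ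
  have hββ := R.inner_self_ne hβΦ
  have hsspos : (0:ℝ) < inner ℝ s s := lt_of_le_of_ne real_inner_self_nonneg (Ne.symm hss)
  have hββpos : (0:ℝ) < inner ℝ β β := lt_of_le_of_ne real_inner_self_nonneg (Ne.symm hββ)
  have hcomm : (inner ℝ β s : ℝ) = inner ℝ s β := real_inner_comm s β
  set A : ℝ := inner ℝ s β with hA
  set B : ℝ := inner ℝ s s with hB
  set C : ℝ := inner ℝ β β with hC
  set k : ℝ := 2 * A / B with hk
  have hrΦ : β - k • s ∈ R.Φ := R.reflect_mem s hsΦ β hβΦ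
  have hrW : β - k • s ∈ W := W.sub_mem hβW (W.smul_mem _ hsW)
  by_contra hcon
  have hrPos : β - k • s ∉ R.Pos := fun hp => hcon (Finset.mem_filter.mpr ⟨hp, hrW⟩)
  have hγPos : k • s - β ∈ R.Pos := by
    rcases R.pos_or_neg _ hrΦ with h | h
    · exact absurd h hrPos
    · simpa [neg_sub] using h
  have hγP : k • s - β ∈ R.PW W :=
    Finset.mem_filter.mpr ⟨hγPos, W.sub_mem (W.smul_mem _ hsW) hβW⟩
  have hhts : (1:ℝ) ≤ R.ht s := by exact_mod_cast R.ht_pos hsPos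
  have hhtβ : (1:ℝ) ≤ R.ht β := by exact_mod_cast R.ht_pos hβPos
  have hhtγ : (1:ℝ) ≤ R.ht (k • s - β) := by exact_mod_cast R.ht_pos hγPos
  have hcomb : (R.ht β : ℝ) + R.ht (k • s - β) = k * R.ht s :=
    R.ht_comb hβPos hγPos hsPos (by abel)
  obtain ⟨z, hz⟩ := R.cartan_int s hsΦ β hβΦ
  rw [← hA, ← hB, ← hk] at hz
  have hzpos : (0:ℝ) < z := by nlinarith [hz ▸ hcomb]
  have hz1 : 1 ≤ z := by
    have : (0:ℤ) < z := by exact_mod_cast hzpos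
    omega
  -- z = 1 is impossible
  have hzne1 : z ≠ 1 := by
    intro hz1'
    have hk1 : k = 1 := by rw [hz, hz1']; norm_num
    exact hdecomp β hβ (k • s - β) hγP (by rw [hk1]; module)
  have hz2 : 2 ≤ z := by omega
  -- β is not a multiple of s
  have hNcol : ∀ c : ℝ, β ≠ c • s := by
    intro c hc
    have hcΦ : c • s ∈ R.Φ := hc ▸ hβΦ
    rcases R.reduced s hsΦ c hcΦ with h1 | h1
    · rw [h1, one_smul] at hc; exact hne hc
    · rw [h1, neg_one_smul] at hc
      exact R.not_pos_and_neg s hsPos (hc ▸ hβPos)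
  -- strict Cauchy-Schwarz
  have hcs : A * A < B * C := by
    rcases lt_or_eq_of_le (real_inner_mul_inner_self_le s β) with h | h
    · rw [← hA, ← hB, ← hC] at h; exact h
    · exfalso
      rw [← hA, ← hB, ← hC] at h
      set μ : ℝ := A / B with hμ
      have hexp : (inner ℝ (β - μ • s) (β - μ • s) : ℝ) = C - 2*μ*A + μ^2*B := by
        simp only [inner_sub_left, inner_sub_right, real_inner_smul_left, real_inner_smul_right]
        rw [hcomm, ← hA, ← hB, ← hC]
        ring
      have hzero : (inner ℝ (β - μ • s) (β - μ • s) : ℝ) = 0 := by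
        rw [hexp, hμ]
        field_simp
        linear_combination (-1 : ℝ) * h
      exact hNcol μ (sub_eq_zero.mp (inner_self_eq_zero.mp hzero))
  obtain ⟨z', hz'⟩ := R.cartan_int β hβΦ s hsΦ
  rw [hcomm, ← hC] at hz'
  have hsbpos : (0:ℝ) < A := by
    have hkpos : (0:ℝ) < k := by rw [hz]; exact hzpos
    rw [hk] at hkpos
    rcases div_pos_iff.mp hkpos with ⟨h1, _⟩ | ⟨_, h2⟩
    · linarith
    · linarith
  have hz'pos : (0:ℝ) < z' := by
    rw [← hz']
    exact div_pos (by linarith) hββpos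
  have hz'1 : 1 ≤ z' := by
    have : (0:ℤ) < z' := by exact_mod_cast hz'pos
    omega
  have hzz4 : z * z' < 4 := by
    have h4 : (2 * A / B) * (2 * A / C) < 4 := by
      rw [div_mul_div_comm, div_lt_iff₀ (by positivity)]
      nlinarith [hcs]
    rw [← hk, hz, hz'] at h4
    exact_mod_cast h4
  have hz'eq1 : z' = 1 := by nlinarith
  have hz3 : z ≤ 3 := by nlinarith
  have hk'1 : (2 * A / C : ℝ) = 1 := by rw [hz', hz'eq1]; norm_num
  -- s - β ∈ Φ
  have hsβΦ : s - β ∈ R.Φ := by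
    have h1 := R.reflect_mem β hβΦ s hsΦ
    rw [hcomm, ← hC, hk'1, one_smul] at h1
    exact h1
  have hsβnPos : s - β ∉ R.Pos := by
    intro h
    exact hdecomp β hβ (s - β)
      (Finset.mem_filter.mpr ⟨h, W.sub_mem hsW hβW⟩) (by abel)
  have hδPos : β - s ∈ R.Pos := by
    rcases R.pos_or_neg _ hsβΦ with h | h
    · exact absurd h hsβnPos
    · simpa [neg_sub] using h
  have hδP : β - s ∈ R.PW W := Finset.mem_filter.mpr ⟨hδPos, W.sub_mem hβW hsW⟩
  rcases (by omega : z = 2 ∨ z = 3) with hz2' | hz3'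
  · -- z = 2
    have hk2 : k = 2 := by rw [hz, hz2']; norm_num
    exact hdecomp (k • s - β) hγP (β - s) hδP (by rw [hk2]; module)
  · -- z = 3
    have hk3 : k = 3 := by rw [hz, hz3']; norm_num
    have hδΦ : β - s ∈ R.Φ := R.Pos_sub hδPos
    have hc2 : (2 * inner ℝ s (β - s) / inner ℝ s s : ℝ) = k - 2 := by
      rw [inner_sub_right, ← hA, ← hB, hk, mul_sub, sub_div,
        mul_div_assoc 2 B B, div_self hss, mul_one]
    have h2 : (β - s) - ((2 * inner ℝ s (β - s) / inner ℝ s s : ℝ)) • s ∈ R.Φ :=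
      R.reflect_mem s hsΦ (β - s) hδΦ
    rw [hc2, hk3] at h2
    have h2' : β - s - s ∈ R.Φ := by
      have he : β - s - ((3:ℝ) - 2) • s = β - s - s := by norm_num
      rwa [he] at h2
    have hηnPos : -(β - s - s) ∉ R.Pos := by
      intro h
      refine hdecomp (-(β - s - s))
        (Finset.mem_filter.mpr ⟨h, ?_⟩) (β - s) hδP (by abel)
      exact W.neg_mem (W.sub_mem (W.sub_mem hβW hsW) hsW)
    have hεPos : β - s - s ∈ R.Pos := by
      rcases R.pos_or_neg _ h2' with h | h
      · exact h
      · exact absurd h hηnPos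
    have hεP : β - s - s ∈ R.PW W :=
      Finset.mem_filter.mpr ⟨hεPos, W.sub_mem (W.sub_mem hβW hsW) hsW⟩
    exact hdecomp (k • s - β) hγP (β - s - s) hεP (by rw [hk3]; module)

end Aux2
section Aux3

variable {n : ℕ}

lemma refl_inner_right (s β : EuclideanSpace ℝ (Fin n)) (hss : (inner ℝ s s : ℝ) ≠ 0) :
    (inner ℝ (β - (2 * inner ℝ s β / inner ℝ s s : ℝ) • s) s : ℝ) = -(inner ℝ β s : ℝ) := by
  rw [inner_sub_left, real_inner_smul_left, real_inner_comm s β]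
  rw [div_mul_cancel₀ _ hss]
  ring

lemma refl_inner_self (s β : EuclideanSpace ℝ (Fin n)) (hss : (inner ℝ s s : ℝ) ≠ 0) :
    (inner ℝ (β - (2 * inner ℝ s β / inner ℝ s s : ℝ) • s)
        (β - (2 * inner ℝ s β / inner ℝ s s : ℝ) • s) : ℝ) = (inner ℝ β β : ℝ) := by
  simp only [inner_sub_left, inner_sub_right, real_inner_smul_left, real_inner_smul_right]
  rw [real_inner_comm s β]
  set A : ℝ := inner ℝ s β
  set B : ℝ := inner ℝ s s
  set C : ℝ := inner ℝ β β
  field_simp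
  ring

lemma refl_coeff (s β : EuclideanSpace ℝ (Fin n)) (hss : (inner ℝ s s : ℝ) ≠ 0) :
    (2 * inner ℝ s (β - (2 * inner ℝ s β / inner ℝ s s : ℝ) • s) / inner ℝ s s : ℝ)
      = -(2 * inner ℝ s β / inner ℝ s s : ℝ) := by
  rw [inner_sub_right, real_inner_smul_right]
  set A : ℝ := inner ℝ s β
  set B : ℝ := inner ℝ s s
  field_simp
  ring

lemma refl_invol (s β : EuclideanSpace ℝ (Fin n)) (hss : (inner ℝ s s : ℝ) ≠ 0) :
    (β - (2 * inner ℝ s β / inner ℝ s s : ℝ) • s)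
      - (2 * inner ℝ s (β - (2 * inner ℝ s β / inner ℝ s s : ℝ) • s) / inner ℝ s s : ℝ) • s = β := by
  rw [refl_coeff s β hss, neg_smul]
  abel

/-- The sum of the Cartan pairings of an indecomposable root of `P = Pos ∩ W`
against all elements of `P` equals 2. -/
lemma CRS.sum_cart_simple (R : CRS n) (W : Submodule ℝ (EuclideanSpace ℝ (Fin n)))
    {s : EuclideanSpace ℝ (Fin n)} (hs : s ∈ simpleOf (R.PW W)) :
    ∑ β ∈ R.PW W, (2 * inner ℝ β s / inner ℝ β β : ℝ) = 2 := by
  have hsP : s ∈ R.PW W := (Finset.mem_filter.mp hs).1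
  have hsPos : s ∈ R.Pos := (Finset.mem_filter.mp hsP).1
  have hsΦ : s ∈ R.Φ := R.Pos_sub hsPos
  have hss := R.inner_self_ne hsΦ
  have h1 : (2 * inner ℝ s s / inner ℝ s s : ℝ) = 2 := by
    rw [mul_div_assoc, div_self hss, mul_one]
  rw [← Finset.add_sum_erase _ _ hsP, h1]
  set σ : EuclideanSpace ℝ (Fin n) → EuclideanSpace ℝ (Fin n) :=
    fun β => β - (2 * inner ℝ s β / inner ℝ s s : ℝ) • s with hσ
  have hinvol : ∀ β, σ (σ β) = β := fun β => refl_invol s β hss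
  have hmem : ∀ β ∈ (R.PW W).erase s, σ β ∈ (R.PW W).erase s := by
    intro β hβ
    obtain ⟨hβne, hβP⟩ := Finset.mem_erase.mp hβ
    have h2 : σ β ∈ R.PW W := R.reflect_mem_PW W hs hβP hβne
    refine Finset.mem_erase.mpr ⟨?_, h2⟩
    intro hcontra
    have hβval : β = σ s := by rw [← hinvol β, hcontra]
    have hσs : σ s = -s := by
      show s - (2 * inner ℝ s s / inner ℝ s s : ℝ) • s = -s
      rw [h1]
      module
    rw [hσs] at hβval
    exact R.not_pos_and_neg s hsPos (hβval ▸ (Finset.mem_filter.mp hβP).1)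
  have h0 : ∑ β ∈ (R.PW W).erase s, (2 * inner ℝ β s / inner ℝ β β : ℝ) = 0 := by
    refine Finset.sum_involution (fun β _ => σ β) ?_ ?_ (fun β hβ => hmem β hβ)
      (fun β _ => hinvol β)
    · intro β hβ
      have e1 : (inner ℝ (σ β) s : ℝ) = -(inner ℝ β s : ℝ) := refl_inner_right s β hss
      have e2 : (inner ℝ (σ β) (σ β) : ℝ) = (inner ℝ β β : ℝ) := refl_inner_self s β hss
      rw [e1, e2]
      ring
    · intro β hβ hfβ hcontra
      apply hfβ
      have hc0 : (2 * inner ℝ s β / inner ℝ s s : ℝ) • s = 0 := by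
        have := sub_eq_self.mp hcontra
        exact this
      rcases smul_eq_zero.mp hc0 with hc | hc
      · have hnum : (inner ℝ s β : ℝ) = 0 := by
          rcases div_eq_zero_iff.mp hc with h' | h'
          · linarith
          · exact absurd h' hss
        rw [← real_inner_comm β s, hnum]
        simp
      · exact absurd hc (R.root_ne_zero hsΦ)
  rw [h0, add_zero]

end Aux3
section Aux4

variable {n : ℕ}

/-- Every element of `P = Pos ∩ W` is a nonnegative integer combination of the
indecomposable elements of `P`. -/
lemma CRS.exists_decomp (R : CRS n) (W : Submodule ℝ (EuclideanSpace ℝ (Fin n))) :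
    ∀ N : ℕ, ∀ γ ∈ R.PW W, R.ht γ ≤ N →
      ∃ c : EuclideanSpace ℝ (Fin n) → ℕ,
        γ = ∑ t ∈ simpleOf (R.PW W), (c t : ℝ) • t := by
  intro N
  induction N with
  | zero =>
    intro γ hγ h0
    have := R.ht_pos (Finset.mem_filter.mp hγ).1
    omega
  | succ N ih =>
    intro γ hγ hle
    by_cases hd : ∃ b1 ∈ R.PW W, ∃ b2 ∈ R.PW W, γ = b1 + b2
    · obtain ⟨b1, h1, b2, h2, heq⟩ := hd
      have hb1Pos := (Finset.mem_filter.mp h1).1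
      have hb2Pos := (Finset.mem_filter.mp h2).1
      have hγPos := (Finset.mem_filter.mp hγ).1
      have hadd : R.ht b1 + R.ht b2 = R.ht γ := R.ht_add hb1Pos hb2Pos hγPos heq
      have hp1 := R.ht_pos hb1Pos
      have hp2 := R.ht_pos hb2Pos
      obtain ⟨c1, hc1⟩ := ih b1 h1 (by omega)
      obtain ⟨c2, hc2⟩ := ih b2 h2 (by omega)
      refine ⟨fun v => c1 v + c2 v, ?_⟩
      rw [heq, hc1, hc2, ← Finset.sum_add_distrib]
      refine Finset.sum_congr rfl fun t _ => ?_
      push_cast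
      rw [add_smul]
    · have hsimple : γ ∈ simpleOf (R.PW W) := Finset.mem_filter.mpr ⟨hγ, hd⟩
      refine ⟨fun v => if v = γ then 1 else 0, ?_⟩
      rw [Finset.sum_congr rfl
        (fun t _ => (by split <;> simp : ((if t = γ then (1:ℕ) else 0 : ℕ) : ℝ) • t
          = if t = γ then t else 0))]
      rw [Finset.sum_ite_eq' (simpleOf (R.PW W)) γ (fun t => t), if_pos hsimple]

/-- Linearity of the Cartan-pairing sum. -/
lemma CRS.sum_cart_of_decomp (R : CRS n) (W : Submodule ℝ (EuclideanSpace ℝ (Fin n)))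
    {γ : EuclideanSpace ℝ (Fin n)} (S : Finset (EuclideanSpace ℝ (Fin n)))
    (c : EuclideanSpace ℝ (Fin n) → ℝ)
    (hdec : γ = ∑ t ∈ S, c t • t)
    (hval : ∀ t ∈ S, ∑ β ∈ R.PW W, (2 * inner ℝ β t / inner ℝ β β : ℝ) = 2) :
    ∑ β ∈ R.PW W, (2 * inner ℝ β γ / inner ℝ β β : ℝ) = 2 * ∑ t ∈ S, c t := by
  calc ∑ β ∈ R.PW W, (2 * inner ℝ β γ / inner ℝ β β : ℝ)
      = ∑ β ∈ R.PW W, ∑ t ∈ S, c t * (2 * inner ℝ β t / inner ℝ β β : ℝ) := by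
        refine Finset.sum_congr rfl fun β hβ => ?_
        rw [hdec, inner_sum]
        rw [Finset.mul_sum, Finset.sum_div]
        refine Finset.sum_congr rfl fun t _ => ?_
        rw [real_inner_smul_right]
        ring
    _ = ∑ t ∈ S, c t * ∑ β ∈ R.PW W, (2 * inner ℝ β t / inner ℝ β β : ℝ) := by
        rw [Finset.sum_comm]
        exact Finset.sum_congr rfl fun t _ => (Finset.mul_sum _ _ _).symm
    _ = ∑ t ∈ S, c t * 2 := Finset.sum_congr rfl fun t ht => by rw [hval t ht]
    _ = 2 * ∑ t ∈ S, c t := by rw [Finset.mul_sum]; exact Finset.sum_congr rfl fun t _ => by ring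

/-- Main local lemma: `α ∈ P` has a well-defined height in `P`, computed by the
Cartan-pairing sum. -/
lemma CRS.htin_key (R : CRS n) (W : Submodule ℝ (EuclideanSpace ℝ (Fin n)))
    {γ : EuclideanSpace ℝ (Fin n)} (hγ : γ ∈ R.PW W) :
    ∃ m : ℕ, HtIn (R.PW W) γ m ∧ 1 ≤ m ∧
      ∑ β ∈ R.PW W, (2 * inner ℝ β γ / inner ℝ β β : ℝ) = 2 * m := by
  obtain ⟨c, hc⟩ := R.exists_decomp W (R.ht γ) γ hγ le_rfl
  refine ⟨∑ t ∈ simpleOf (R.PW W), c t, ⟨c, hc, rfl⟩, ?_, ?_⟩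
  · by_contra h0
    push_neg at h0
    have hz : ∑ t ∈ simpleOf (R.PW W), c t = 0 := by omega
    have hγ0 : γ = 0 := by
      rw [hc]
      refine Finset.sum_eq_zero fun t ht => ?_
      have : c t = 0 := Finset.sum_eq_zero_iff.mp hz t ht
      simp [this]
    exact R.root_ne_zero (R.Pos_sub (Finset.mem_filter.mp hγ).1) hγ0
  · rw [R.sum_cart_of_decomp W (simpleOf (R.PW W)) (fun t => (c t : ℝ)) hc
      (fun t ht => R.sum_cart_simple W ht)]
    rw [Nat.cast_sum]

lemma CRS.PW_top (R : CRS n) : R.PW ⊤ = R.Pos :=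
  Finset.filter_true_of_mem (fun _ _ => Submodule.mem_top)

lemma CRS.ht_simple (R : CRS n) {a : EuclideanSpace ℝ (Fin n)} (ha : a ∈ R.Δ) : R.ht a = 1 := by
  have haPos : a ∈ R.Pos := R.Δ_sub ha
  have h1 : a = ∑ b ∈ R.Δ, (if b = a then (1:ℝ) else 0) • b := by
    rw [Finset.sum_congr rfl
      (fun t _ => (by split <;> simp : ((if t = a then (1:ℝ) else 0)) • t
        = if t = a then t else 0))]
    rw [Finset.sum_ite_eq' R.Δ a (fun t => t), if_pos ha]
  have hco := R.coeff_eq ((R.pos_eq_sum a haPos).symm.trans h1)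
  have : ∀ b ∈ R.Δ, R.coeff a b = if b = a then 1 else 0 := by
    intro b hb
    have h' := hco b hb
    by_cases hba : b = a
    · simp only [hba, if_true] at h' ⊢; exact_mod_cast h'
    · simp only [hba, if_false] at h' ⊢; exact_mod_cast h'
  rw [CRS.ht, Finset.sum_congr rfl this, Finset.sum_ite_eq' R.Δ a (fun _ => 1), if_pos ha]

lemma CRS.simple_mem_top (R : CRS n) {a : EuclideanSpace ℝ (Fin n)} (ha : a ∈ R.Δ) :
    a ∈ simpleOf (R.PW ⊤) := by
  rw [R.PW_top]
  refine Finset.mem_filter.mpr ⟨R.Δ_sub ha, ?_⟩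
  rintro ⟨b1, h1, b2, h2, heq⟩
  have hadd := R.ht_add h1 h2 (R.Δ_sub ha) heq
  have := R.ht_pos h1
  have := R.ht_pos h2
  have := R.ht_simple ha
  omega

/-- Global Cartan-pairing sum equals twice the height. -/
lemma CRS.sum_cart_global (R : CRS n) {α : EuclideanSpace ℝ (Fin n)} (hα : α ∈ R.Pos) :
    ∑ β ∈ R.Pos, (2 * inner ℝ β α / inner ℝ β β : ℝ) = 2 * R.ht α := by
  have h := R.sum_cart_of_decomp ⊤ R.Δ (fun a => (R.coeff α a : ℝ))
    (R.pos_eq_sum α hα)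
    (fun a ha => R.sum_cart_simple ⊤ (R.simple_mem_top ha))
  rw [R.PW_top] at h
  rw [h, CRS.ht, Nat.cast_sum]

end Aux4
section Aux5

variable {n : ℕ}

lemma H_inf_eq (β' α : EuclideanSpace ℝ (Fin n)) :
    H β' ⊓ H α = (Submodule.span ℝ {β', α})ᗮ := by
  rw [H, H, Submodule.inf_orthogonal]
  congr 1
  rw [Submodule.span_insert]

lemma Xperp_eq (β' α : EuclideanSpace ℝ (Fin n)) :
    (H β' ⊓ H α)ᗮ = Submodule.span ℝ {β', α} := by
  rw [H_inf_eq, Submodule.orthogonal_orthogonal]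

lemma CRS.span_swap (R : CRS n) {α β β' : EuclideanSpace ℝ (Fin n)}
    (hα : α ∈ R.Pos) (hβ : β ∈ R.Pos) (hne : β ≠ α)
    (hmem : β ∈ Submodule.span ℝ {β', α}) :
    Submodule.span ℝ ({β', α} : Set (EuclideanSpace ℝ (Fin n)))
      = Submodule.span ℝ ({β, α} : Set (EuclideanSpace ℝ (Fin n))) := by
  have hβΦ := R.Pos_sub hβ
  have hαΦ := R.Pos_sub hα
  obtain ⟨a, b, hab⟩ := Submodule.mem_span_pair.mp hmem
  have ha0 : a ≠ 0 := by
    intro h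
    rw [h, zero_smul, zero_add] at hab
    rcases R.reduced α hαΦ b (hab ▸ hβΦ) with h1 | h1
    · rw [h1, one_smul] at hab; exact hne hab.symm
    · rw [h1, neg_one_smul] at hab
      exact R.not_pos_and_neg α hα (hab ▸ hβ)
  have hβmem : β ∈ Submodule.span ℝ ({β, α} : Set (EuclideanSpace ℝ (Fin n))) :=
    Submodule.subset_span (Set.mem_insert _ _)
  have hαmem : α ∈ Submodule.span ℝ ({β, α} : Set (EuclideanSpace ℝ (Fin n))) :=
    Submodule.subset_span (Set.mem_insert_iff.mpr (Or.inr rfl))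
  have hαmem' : α ∈ Submodule.span ℝ ({β', α} : Set (EuclideanSpace ℝ (Fin n))) :=
    Submodule.subset_span (Set.mem_insert_iff.mpr (Or.inr rfl))
  apply le_antisymm
  · rw [Submodule.span_le]
    rintro x hx
    rcases Set.mem_insert_iff.mp hx with h1 | h1
    · subst h1
      have hβ' : x = a⁻¹ • (β - b • α) := by
        rw [← hab, add_sub_cancel_right, smul_smul, inv_mul_cancel₀ ha0, one_smul]
      rw [hβ']
      exact Submodule.smul_mem _ _ (Submodule.sub_mem _ hβmem (Submodule.smul_mem _ _ hαmem))
    · rcases h1 with rfl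
      exact hαmem
  · rw [Submodule.span_le]
    rintro x hx
    rcases Set.mem_insert_iff.mp hx with h1 | h1
    · subst h1; exact hmem
    · rcases h1 with rfl
      exact hαmem'

end Aux5
/-- local-global formula for heights:
`ht(α) - 1 = ∑_{X ∈ A^α} (ht_X(α) - 1)`, where `X` runs over the codimension-2
intersections `H_β ∩ H_α` (`β ∈ Φ⁺ \ {α}`) of the Weyl arrangement contained in
`H_α`, and `ht_X(α)` is the height of `α` in the rank-2 subsystem
`Φ_X = Φ ∩ X^⊥` with respect to the positive system `Φ⁺ ∩ Φ_X`. -/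
theorem local_global_height_formula {n : ℕ} (R : CRS n) (hirr : R.Irred)
    (α : EuclideanSpace ℝ (Fin n)) (hα : α ∈ R.Pos) :
    ∃ h : Submodule ℝ (EuclideanSpace ℝ (Fin n)) → ℕ,
      (∀ X ∈ (R.Pos.erase α).image (fun β => H β ⊓ H α),
        HtIn (R.PosIn X) α (h X)) ∧
      R.ht α - 1 =
        ∑ X ∈ (R.Pos.erase α).image (fun β => H β ⊓ H α), (h X - 1) := by
  classical
  set T := (R.Pos.erase α).image (fun β => H β ⊓ H α) with hT
  have hαΦ := R.Pos_sub hα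
  have hαmem : ∀ X ∈ T, α ∈ R.PW Xᗮ := by
    intro X hX
    obtain ⟨β', hβ', hXeq⟩ := Finset.mem_image.mp hX
    refine Finset.mem_filter.mpr ⟨hα, ?_⟩
    rw [← hXeq, Xperp_eq]
    exact Submodule.subset_span (Set.mem_insert_iff.mpr (Or.inr rfl))
  have hkey : ∀ X : Submodule ℝ (EuclideanSpace ℝ (Fin n)), ∃ m : ℕ,
      X ∈ T → (HtIn (R.PosIn X) α m ∧ 1 ≤ m ∧
        ∑ β ∈ R.PW Xᗮ, (2 * inner ℝ β α / inner ℝ β β : ℝ) = 2 * m) := by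
    intro X
    by_cases hX : X ∈ T
    · obtain ⟨m, h1, h2, h3⟩ := R.htin_key Xᗮ (hαmem X hX)
      exact ⟨m, fun _ => ⟨h1, h2, h3⟩⟩
    · exact ⟨1, fun hc => absurd hc hX⟩
  choose h hh using hkey
  refine ⟨h, fun X hX => (hh X hX).1, ?_⟩
  -- the partition of `Pos.erase α` according to the planes
  have hcover : R.Pos.erase α = T.biUnion (fun X => (R.PW Xᗮ).erase α) := by
    ext β
    constructor
    · intro hβ
      obtain ⟨hne, hβPos⟩ := Finset.mem_erase.mp hβ
      refine Finset.mem_biUnion.mpr ⟨H β ⊓ H α, Finset.mem_image_of_mem _ hβ, ?_⟩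
      refine Finset.mem_erase.mpr ⟨hne, Finset.mem_filter.mpr ⟨hβPos, ?_⟩⟩
      rw [Xperp_eq]
      exact Submodule.subset_span (Set.mem_insert _ _)
    · intro hβ
      obtain ⟨X, hX, hβX⟩ := Finset.mem_biUnion.mp hβ
      obtain ⟨hne, hβP⟩ := Finset.mem_erase.mp hβX
      exact Finset.mem_erase.mpr ⟨hne, (Finset.mem_filter.mp hβP).1⟩
  have hdisj : (↑T : Set (Submodule ℝ (EuclideanSpace ℝ (Fin n)))).PairwiseDisjoint
      (fun X => (R.PW Xᗮ).erase α) := by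
    intro X hX Y hY hXY
    simp only [Function.onFun]
    rw [Finset.disjoint_left]
    intro β hβX hβY
    apply hXY
    obtain ⟨β₁, hβ₁, hX1⟩ := Finset.mem_image.mp (Finset.mem_coe.mp hX)
    obtain ⟨β₂, hβ₂, hY1⟩ := Finset.mem_image.mp (Finset.mem_coe.mp hY)
    obtain ⟨hne, hβP⟩ := Finset.mem_erase.mp hβX
    have hβPos : β ∈ R.Pos := (Finset.mem_filter.mp hβP).1
    have hmX : β ∈ Submodule.span ℝ {β₁, α} := by
      have := (Finset.mem_filter.mp hβP).2
      rwa [← hX1, Xperp_eq] at this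
    have hmY : β ∈ Submodule.span ℝ {β₂, α} := by
      have := (Finset.mem_filter.mp ((Finset.mem_erase.mp hβY).2)).2
      rwa [← hY1, Xperp_eq] at this
    have e1 := R.span_swap hα hβPos hne hmX
    have e2 := R.span_swap hα hβPos hne hmY
    rw [← hX1, ← hY1, H_inf_eq, H_inf_eq, e1, e2]
  -- the Cartan-pairing sums
  have hGα : (2 * inner ℝ α α / inner ℝ α α : ℝ) = 2 := by
    rw [mul_div_assoc, div_self (R.inner_self_ne hαΦ), mul_one]
  have hsplit : ∑ β ∈ R.Pos.erase α, (2 * inner ℝ β α / inner ℝ β β : ℝ)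
      = 2 * R.ht α - 2 := by
    rw [Finset.sum_erase_eq_sub hα, R.sum_cart_global hα, hGα]
  have hloc : ∀ X ∈ T, ∑ β ∈ (R.PW Xᗮ).erase α, (2 * inner ℝ β α / inner ℝ β β : ℝ)
      = 2 * (h X : ℝ) - 2 := by
    intro X hX
    rw [Finset.sum_erase_eq_sub (hαmem X hX), (hh X hX).2.2, hGα]
  have hbig : 2 * (R.ht α : ℝ) - 2 = ∑ X ∈ T, (2 * (h X : ℝ) - 2) := by
    rw [← hsplit, hcover, Finset.sum_biUnion hdisj]
    exact Finset.sum_congr rfl hloc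
  -- conclude in ℕ
  have hhtα := R.ht_pos hα
  have hfin : ((R.ht α - 1 : ℕ) : ℝ) = ((∑ X ∈ T, (h X - 1) : ℕ) : ℝ) := by
    rw [Nat.cast_sub hhtα, Nat.cast_sum]
    rw [Finset.sum_congr rfl (fun X hX => Nat.cast_sub ((hh X hX).2.1))]
    have e3 : ∑ X ∈ T, ((h X : ℝ) - (1 : ℕ)) = (∑ X ∈ T, (h X : ℝ)) - T.card := by
      rw [Finset.sum_sub_distrib, Finset.sum_const, nsmul_eq_mul, Nat.cast_one, mul_one]
    have e4 : ∑ X ∈ T, (2 * (h X : ℝ) - 2) = 2 * (∑ X ∈ T, (h X : ℝ)) - 2 * T.card := by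
      rw [Finset.sum_sub_distrib, Finset.sum_const, nsmul_eq_mul, Finset.mul_sum]
      ring
    rw [e3]
    rw [e4] at hbig
    push_cast at hbig ⊢
    linarith
  exact Nat.cast_injective hfin
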